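/- Assume (H1), (H2) and (H2+). There exists a function h : (0,∞) → (0,∞) with h(t) → 0 as t → 0 satisfying the following: for every n ≥ 1 and every word (ω₁…ω_n) ∈ {0,1}ⁿ such that the map g = f_{[ω₁…ω_n]} has a fixed point in [0,1], and for every ε > 0 and every x ∈ [a_{[ω₁…ω_n]}, 1] with |g(x) − x| < ε, the distance from x to the closest fixed point of g is at most h(ε). -/

import Mathlib

open Set MeasureTheory Filter

namespace DGR

/-- The two-sided sequence space `Σ₂ = {0,1}^ℤ`. -/
abbrev Seq2 := ℤ → Fin 2

/-- The left shift map `σ`. -/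
def shift (ξ : Seq2) : Seq2 := fun n => ξ (n + 1)

/-- The constant sequence `0^ℤ`. -/
def zeroSeq : Seq2 := fun _ => 0

/-- The skew-product `F̃(ξ,x) = (σ ξ, f̃_{ξ₀} x)`. -/
def F (f0 f1 : ℝ → ℝ) (p : Seq2 × ℝ) : Seq2 × ℝ :=
  (shift p.1, if p.1 0 = 0 then f0 p.2 else f1 p.2)

/-- The fixed point `P = (0^ℤ, 1)`. -/
def Pfix : Seq2 × ℝ := (zeroSeq, 1)

/-- The fixed point `Q = (0^ℤ, 0)`. -/
def Qfix : Seq2 × ℝ := (zeroSeq, 0)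

/-- `f_ξ^n = f_{ξ_{n-1}} ∘ ⋯ ∘ f_{ξ₀}`. -/
def fIter (f0 f1 : ℝ → ℝ) (ξ : Seq2) : ℕ → ℝ → ℝ
  | 0, x => x
  | n + 1, x => (if ξ (n : ℤ) = 0 then f0 else f1) (fIter f0 f1 ξ n x)

/-- The derivative `(f_ξ^n)'(x)` (chain rule product). -/
def fIterDeriv (f0 f1 df0 df1 : ℝ → ℝ) (ξ : Seq2) : ℕ → ℝ → ℝ
  | 0, _ => 1
  | n + 1, x => fIterDeriv f0 f1 df0 df1 ξ n x *
      (if ξ (n : ℤ) = 0 then df0 else df1) (fIter f0 f1 ξ n x)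

/-- `ξ⁺` is admissible for `x`: all forward iterates are defined and stay in `[0,1]`. -/
def forwardAdmissible (f0 f1 : ℝ → ℝ) (d : ℝ) (ξ : Seq2) (x : ℝ) : Prop :=
  ∀ n : ℕ, fIter f0 f1 ξ n x ∈ Icc (0 : ℝ) 1 ∧ (ξ (n : ℤ) = 1 → d ≤ fIter f0 f1 ξ n x)

/-- `ξ⁻` is admissible for `x`: there is a backward orbit through `x` staying in `[0,1]`. -/
def backwardAdmissible (f0 f1 : ℝ → ℝ) (d : ℝ) (ξ : Seq2) (x : ℝ) : Prop :=
  ∃ y : ℕ → ℝ, y 0 = x ∧ ∀ m : ℕ,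
    y m ∈ Icc (0 : ℝ) 1 ∧
    (ξ (-(m : ℤ) - 1) = 0 → f0 (y (m + 1)) = y m) ∧
    (ξ (-(m : ℤ) - 1) = 1 → d ≤ y (m + 1) ∧ f1 (y (m + 1)) = y m)

/-- The maximal invariant set `Γ` of `F̃` in `Σ₂ × [0,1]`. -/
def Gamma (f0 f1 : ℝ → ℝ) (d : ℝ) : Set (Seq2 × ℝ) :=
  { p | forwardAdmissible f0 f1 d p.1 p.2 ∧ backwardAdmissible f0 f1 d p.1 p.2 }

/-- The subshift `Σ = π(Γ)` of admissible sequences. -/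
def SigmaA (f0 f1 : ℝ → ℝ) (d : ℝ) : Set Seq2 := Prod.fst '' Gamma f0 f1 d

/-- `I_{ξ⁺}`. -/
def Iplus (f0 f1 : ℝ → ℝ) (d : ℝ) (ξ : Seq2) : Set ℝ := { x | forwardAdmissible f0 f1 d ξ x }

/-- `I_{ξ⁻}`. -/
def Iminus (f0 f1 : ℝ → ℝ) (d : ℝ) (ξ : Seq2) : Set ℝ := { x | backwardAdmissible f0 f1 d ξ x }

/-- `I_ξ = I_{ξ⁺} ∩ I_{ξ⁻}`, the spine over `ξ`. -/
def Ifiber (f0 f1 : ℝ → ℝ) (d : ℝ) (ξ : Seq2) : Set ℝ := Iplus f0 f1 d ξ ∩ Iminus f0 f1 d ξ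

/-- `x_{ξ⁺}`, the left endpoint of `I_{ξ⁺} = [x_{ξ⁺}, 1]`. -/
noncomputable def xPlus (f0 f1 : ℝ → ℝ) (d : ℝ) (ξ : Seq2) : ℝ := sInf (Iplus f0 f1 d ξ)

/-- `x_{ξ⁻}`, the right endpoint of `I_{ξ⁻} = [0, x_{ξ⁻}]`. -/
noncomputable def xMinus (f0 f1 : ℝ → ℝ) (d : ℝ) (ξ : Seq2) : ℝ := sSup (Iminus f0 f1 d ξ)

/-- Hypothesis (H1), stated for strictly increasing differentiable extensions
`f0, f1 : ℝ → ℝ` with derivative functions `df0, df1`, whose restrictions to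
`[0,1]` resp. `[d,1]` are the fiber maps. -/
structure H1 (f0 f1 df0 df1 : ℝ → ℝ) (d : ℝ) : Prop where
  d_mem : d ∈ Ioo (0 : ℝ) 1
  mono0 : StrictMono f0
  mono1 : StrictMono f1
  hasDeriv0 : ∀ x, HasDerivAt f0 (df0 x) x
  hasDeriv1 : ∀ x, HasDerivAt f1 (df1 x) x
  contDeriv0 : ContinuousOn df0 (Icc 0 1)
  contDeriv1 : ContinuousOn df1 (Icc d 1)
  maps0 : MapsTo f0 (Icc 0 1) (Icc 0 1)
  surj0 : SurjOn f0 (Icc 0 1) (Icc 0 1)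
  maps1 : MapsTo f1 (Icc d 1) (Icc 0 1)
  deriv0_zero : 1 < df0 0
  deriv0_one : df0 1 ∈ Ioo (0 : ℝ) 1
  f0_above : ∀ x ∈ Ioo (0 : ℝ) 1, x < f0 x
  f1_d : f1 d = 0
  f1_below : ∀ x ∈ Icc d 1, f1 x < x
  deriv1_one : 0 < df1 1

/-- Hypothesis (H2): `f₀'` strictly decreasing, `f₁'` nonincreasing. -/
def H2 (df0 df1 : ℝ → ℝ) (d : ℝ) : Prop :=
  StrictAntiOn df0 (Icc 0 1) ∧ AntitoneOn df1 (Icc d 1)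

/-- Hypothesis (H2+) with constant `M`. -/
def H2plus (df0 df1 : ℝ → ℝ) (d M : ℝ) : Prop :=
  1 < M ∧
  (∀ x ∈ Icc (0 : ℝ) 1, ∀ y ∈ Icc (0 : ℝ) 1, x < y →
    M⁻¹ * (y - x) ≤ Real.log (df0 x) - Real.log (df0 y) ∧
      Real.log (df0 x) - Real.log (df0 y) ≤ M * (y - x)) ∧
  (∀ x ∈ Icc d 1, ∀ y ∈ Icc d 1, x < y →
    M⁻¹ * (y - x) ≤ Real.log (df1 x) - Real.log (df1 y) ∧
      Real.log (df1 x) - Real.log (df1 y) ≤ M * (y - x))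

/-- The fiber Lyapunov exponent `χ(μ) = ∫ log f'_{ξ₀}(x) dμ(ξ,x)`. -/
noncomputable def lyap (df0 df1 : ℝ → ℝ) (μ : Measure (Seq2 × ℝ)) : ℝ :=
  ∫ p, Real.log ((if p.1 0 = 0 then df0 else df1) p.2) ∂μ

/-- An `F`-invariant Borel probability measure on `Γ`. -/
def IsInvGamma (f0 f1 : ℝ → ℝ) (d : ℝ) (μ : Measure (Seq2 × ℝ)) : Prop :=
  IsProbabilityMeasure μ ∧ μ (Gamma f0 f1 d) = 1 ∧ μ.map (F f0 f1) = μ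

/-- An ergodic `F`-invariant Borel probability measure on `Γ`. -/
def IsErgGamma (f0 f1 : ℝ → ℝ) (d : ℝ) (μ : Measure (Seq2 × ℝ)) : Prop :=
  IsInvGamma f0 f1 d μ ∧ Ergodic (F f0 f1) μ

/-- A `σ`-invariant Borel probability measure on `Σ`. -/
def IsInvSigma (f0 f1 : ℝ → ℝ) (d : ℝ) (ν : Measure Seq2) : Prop :=
  IsProbabilityMeasure ν ∧ ν (SigmaA f0 f1 d) = 1 ∧ ν.map shift = ν

/-- An ergodic `σ`-invariant Borel probability measure on `Σ`. -/
def IsErgSigma (f0 f1 : ℝ → ℝ) (d : ℝ) (ν : Measure Seq2) : Prop :=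
  IsInvSigma f0 f1 d ν ∧ Ergodic shift ν

/-- `f_{[w]} = f_{w_{n-1}} ∘ ⋯ ∘ f_{w_0}` for a finite word `w`. -/
def fWord (f0 f1 : ℝ → ℝ) : List (Fin 2) → ℝ → ℝ
  | [], x => x
  | i :: w, x => fWord f0 f1 w ((if i = 0 then f0 else f1) x)

/-- The derivative `(f_{[w]})'(x)`. -/
def fWordDeriv (f0 f1 df0 df1 : ℝ → ℝ) : List (Fin 2) → ℝ → ℝ
  | [], _ => 1
  | i :: w, x => (if i = 0 then df0 x else df1 x) *
      fWordDeriv f0 f1 df0 df1 w ((if i = 0 then f0 else f1) x)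

/-- The word `w` is (forward) admissible at `x`. -/
def wordAdm (f0 f1 : ℝ → ℝ) (d : ℝ) : List (Fin 2) → ℝ → Prop
  | [], x => x ∈ Icc (0 : ℝ) 1
  | i :: w, x => x ∈ Icc (0 : ℝ) 1 ∧ (i = 1 → d ≤ x) ∧
      wordAdm f0 f1 d w ((if i = 0 then f0 else f1) x)

/-- The admissibility interval `I_{[w]}`. -/
def IWord (f0 f1 : ℝ → ℝ) (d : ℝ) (w : List (Fin 2)) : Set ℝ := { x | wordAdm f0 f1 d w x }

/-- The point `a_{[w]}`, left endpoint of `I_{[w]} = [a_{[w]}, 1]`. -/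
noncomputable def aWord (f0 f1 : ℝ → ℝ) (d : ℝ) (w : List (Fin 2)) : ℝ := sInf (IWord f0 f1 d w)

/-- The periodic sequence `w^ℤ`. -/
def perSeq (w : List (Fin 2)) : Seq2 := fun n => w.getD (n % (w.length : ℤ)).toNat 0

/-- The finite word `(ξ_a, ξ_{a+1}, …, ξ_{a+n-1})` read off a sequence. -/
def seqWord (ξ : Seq2) (a : ℤ) (n : ℕ) : List (Fin 2) := List.ofFn fun i : Fin n => ξ (a + (i.1 : ℤ))

/-- `X` is a periodic point of `F` in `Γ` with period `n ≥ 1`. -/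
def IsPerPt (f0 f1 : ℝ → ℝ) (d : ℝ) (X : Seq2 × ℝ) (n : ℕ) : Prop :=
  X ∈ Gamma f0 f1 d ∧ 1 ≤ n ∧ (F f0 f1)^[n] X = X

/-- Hyperbolic periodic point (the multiplier is different from 1). -/
def IsHypPerPt (f0 f1 df0 df1 : ℝ → ℝ) (d : ℝ) (X : Seq2 × ℝ) : Prop :=
  ∃ n, IsPerPt f0 f1 d X n ∧ fIterDeriv f0 f1 df0 df1 X.1 n X.2 ≠ 1

/-- Hyperbolic periodic point of expanding type. -/
def IsExpPerPt (f0 f1 df0 df1 : ℝ → ℝ) (d : ℝ) (X : Seq2 × ℝ) : Prop :=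
  ∃ n, IsPerPt f0 f1 d X n ∧ 1 < fIterDeriv f0 f1 df0 df1 X.1 n X.2

/-- Hyperbolic periodic point of contracting type. -/
def IsConPerPt (f0 f1 df0 df1 : ℝ → ℝ) (d : ℝ) (X : Seq2 × ℝ) : Prop :=
  ∃ n, IsPerPt f0 f1 d X n ∧ 0 < fIterDeriv f0 f1 df0 df1 X.1 n X.2 ∧
    fIterDeriv f0 f1 df0 df1 X.1 n X.2 < 1

/-- Parabolic periodic point (multiplier 1). -/
def IsParPerPt (f0 f1 df0 df1 : ℝ → ℝ) (d : ℝ) (X : Seq2 × ℝ) : Prop :=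
  ∃ n, IsPerPt f0 f1 d X n ∧ fIterDeriv f0 f1 df0 df1 X.1 n X.2 = 1

/-- The stable set `W^s(R, F)` of a point, for `F : Γ → Γ`. -/
def Ws (f0 f1 : ℝ → ℝ) (d : ℝ) (R : Seq2 × ℝ) : Set (Seq2 × ℝ) :=
  { X | (∀ k : ℕ, (F f0 f1)^[k] X ∈ Gamma f0 f1 d) ∧
      Tendsto (fun k => (F f0 f1)^[k] X) atTop (nhds R) }

/-- The unstable set `W^u(R, F) = W^s(R, F⁻¹)` of a point, for `F : Γ → Γ`. -/
def Wu (f0 f1 : ℝ → ℝ) (d : ℝ) (R : Seq2 × ℝ) : Set (Seq2 × ℝ) :=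
  { X | ∃ Z : ℕ → Seq2 × ℝ, Z 0 = X ∧
      (∀ m : ℕ, Z m ∈ Gamma f0 f1 d ∧ F f0 f1 (Z (m + 1)) = Z m) ∧
      Tendsto Z atTop (nhds R) }

/-- The stable set of the orbit of `R`. -/
def WsOrbit (f0 f1 : ℝ → ℝ) (d : ℝ) (R : Seq2 × ℝ) : Set (Seq2 × ℝ) :=
  ⋃ j : ℕ, Ws f0 f1 d ((F f0 f1)^[j] R)

/-- The unstable set of the orbit of `R`. -/
def WuOrbit (f0 f1 : ℝ → ℝ) (d : ℝ) (R : Seq2 × ℝ) : Set (Seq2 × ℝ) :=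
  ⋃ j : ℕ, Wu f0 f1 d ((F f0 f1)^[j] R)

/-- The homoclinic class `H(R,F)`. -/
def homClass (f0 f1 : ℝ → ℝ) (d : ℝ) (R : Seq2 × ℝ) : Set (Seq2 × ℝ) :=
  closure (WsOrbit f0 f1 d R ∩ WuOrbit f0 f1 d R)

/-- `R₁` and `R₂` are homoclinically related. -/
def HomRel (f0 f1 : ℝ → ℝ) (d : ℝ) (R₁ R₂ : Seq2 × ℝ) : Prop :=
  (WsOrbit f0 f1 d R₁ ∩ WuOrbit f0 f1 d R₂).Nonempty ∧
  (WuOrbit f0 f1 d R₁ ∩ WsOrbit f0 f1 d R₂).Nonempty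

/-- A set is (fiber) hyperbolic of expanding type. -/
def IsHypExpanding (f0 f1 df0 df1 : ℝ → ℝ) (Λ : Set (Seq2 × ℝ)) : Prop :=
  ∃ C : ℝ, 0 < C ∧ ∃ α : ℝ, 0 < α ∧ ∀ p ∈ Λ, ∀ n : ℕ, 1 ≤ n →
    C * Real.exp (α * n) ≤ fIterDeriv f0 f1 df0 df1 p.1 n p.2

/-- A set is (fiber) hyperbolic of contracting type (backward iterates expand). -/
def IsHypContracting (f0 f1 df0 df1 : ℝ → ℝ) (d : ℝ) (Λ : Set (Seq2 × ℝ)) : Prop :=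
  ∃ C : ℝ, 0 < C ∧ ∃ α : ℝ, 0 < α ∧ ∀ p ∈ Λ, ∀ Z : ℕ → Seq2 × ℝ, Z 0 = p →
    (∀ m : ℕ, Z m ∈ Gamma f0 f1 d ∧ F f0 f1 (Z (m + 1)) = Z m) →
    ∀ n : ℕ, 1 ≤ n → fIterDeriv f0 f1 df0 df1 (Z n).1 n (Z n).2 ≤ C * Real.exp (-(α * n))

/-- The nonwandering set `Ω(Γ, F)` of `F : Γ → Γ`. -/
def nonwandering (f0 f1 : ℝ → ℝ) (d : ℝ) : Set (Seq2 × ℝ) :=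
  { X | X ∈ Gamma f0 f1 d ∧ ∀ U : Set (Seq2 × ℝ), IsOpen U → X ∈ U →
      ∃ n : ℕ, 1 ≤ n ∧ ∃ Y ∈ U ∩ Gamma f0 f1 d, (F f0 f1)^[n] Y ∈ U ∩ Gamma f0 f1 d }

/-- The finite word `w` occurs in the sequence `ξ`. -/
def OccursIn (w : List (Fin 2)) (ξ : Seq2) : Prop :=
  ∃ k : ℤ, ∀ i : ℕ, i < w.length → ξ (k + (i : ℤ)) = w.getD i 0

/-- The set `Σ^het` of heteroclinic admissible sequences. -/
def SigmaHet (f0 f1 : ℝ → ℝ) (d : ℝ) : Set Seq2 :=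
  { ξ | ξ ∈ SigmaA f0 f1 d ∧ ∃ k : ℤ, ∃ w : List (Fin 2),
      (∀ m : ℤ, m < k → ξ m = 0) ∧
      (∀ i : ℕ, i < w.length → ξ (k + (i : ℤ)) = w.getD i 0) ∧
      (∀ m : ℤ, k + (w.length : ℤ) ≤ m → ξ m = 0) ∧
      fWord f0 f1 w 1 = 0 }

/-- `Σ^cod = Σ ∖ Σ^het`. -/
def SigmaCod (f0 f1 : ℝ → ℝ) (d : ℝ) : Set Seq2 := SigmaA f0 f1 d \ SigmaHet f0 f1 d

/-- `Γ^cod = π⁻¹(Σ^cod) ∩ Γ`. -/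
def GammaCod (f0 f1 : ℝ → ℝ) (d : ℝ) : Set (Seq2 × ℝ) :=
  { p ∈ Gamma f0 f1 d | p.1 ∈ SigmaCod f0 f1 d }

/-- `Σ^sing`: sequences whose spine is a singleton. -/
def SigmaSing (f0 f1 : ℝ → ℝ) (d : ℝ) : Set Seq2 :=
  { ξ | ξ ∈ SigmaA f0 f1 d ∧ (Ifiber f0 f1 d ξ).Subsingleton }

/-- `Σ^spine`: sequences whose spine is a nondegenerate interval. -/
def SigmaSpine (f0 f1 : ℝ → ℝ) (d : ℝ) : Set Seq2 :=
  { ξ | ξ ∈ SigmaA f0 f1 d ∧ ¬ (Ifiber f0 f1 d ξ).Subsingleton }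

/-- `T` restricted to `S` is topologically transitive. -/
def TransOn {α : Type*} [TopologicalSpace α] (T : α → α) (S : Set α) : Prop :=
  ∀ U V : Set α, IsOpen U → IsOpen V → (U ∩ S).Nonempty → (V ∩ S).Nonempty →
    ∃ n : ℕ, 1 ≤ n ∧ (T^[n] '' (U ∩ S) ∩ (V ∩ S)).Nonempty

/-- `T` restricted to `S` is topologically mixing. -/
def MixOn {α : Type*} [TopologicalSpace α] (T : α → α) (S : Set α) : Prop :=
  ∀ U V : Set α, IsOpen U → IsOpen V → (U ∩ S).Nonempty → (V ∩ S).Nonempty →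
    ∃ N : ℕ, ∀ n : ℕ, N ≤ n → (T^[n] '' (U ∩ S) ∩ (V ∩ S)).Nonempty

/-- A subshift of finite type: the sequences avoiding a finite list of forbidden words. -/
def IsSFT (S : Set Seq2) : Prop :=
  ∃ Fw : Finset (List (Fin 2)), S = { ξ | ∀ w ∈ Fw, ¬ OccursIn w ξ }

/-- Number of words of length `n` appearing in sequences of `S`. -/
noncomputable def wordCount (S : Set Seq2) (n : ℕ) : ℕ :=
  Nat.card { w : List (Fin 2) // w.length = n ∧ ∃ ξ ∈ S, OccursIn w ξ }

/-- Topological entropy of the shift on a subshift `S`, as exponential growth rate of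
the number of words. -/
noncomputable def subshiftEntropy (S : Set Seq2) : ℝ :=
  Filter.limsup (fun n : ℕ => Real.log (wordCount S n) / n) Filter.atTop

/-- `Λ` is `F`-invariant. -/
def IsInvariantSet (f0 f1 : ℝ → ℝ) (Λ : Set (Seq2 × ℝ)) : Prop := F f0 f1 '' Λ = Λ

/-- `Λ` is locally maximal: it is the set of full orbits inside some neighborhood. -/
def IsLocallyMaximal (f0 f1 : ℝ → ℝ) (Λ : Set (Seq2 × ℝ)) : Prop :=
  ∃ V : Set (Seq2 × ℝ), IsOpen V ∧ Λ ⊆ V ∧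
    Λ = { X | ∃ Z : ℤ → Seq2 × ℝ, Z 0 = X ∧ (∀ n : ℤ, Z (n + 1) = F f0 f1 (Z n)) ∧
      ∀ n : ℤ, Z n ∈ V }

/-- Basic set with uniform fiber expansion. -/
def IsBasicExp (f0 f1 df0 df1 : ℝ → ℝ) (d : ℝ) (Λ : Set (Seq2 × ℝ)) : Prop :=
  Λ ⊆ Gamma f0 f1 d ∧ IsCompact Λ ∧ IsInvariantSet f0 f1 Λ ∧ IsLocallyMaximal f0 f1 Λ ∧
  TransOn (F f0 f1) Λ ∧ IsHypExpanding f0 f1 df0 df1 Λ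

/-- Basic set with uniform fiber contraction. -/
def IsBasicCon (f0 f1 df0 df1 : ℝ → ℝ) (d : ℝ) (Λ : Set (Seq2 × ℝ)) : Prop :=
  Λ ⊆ Gamma f0 f1 d ∧ IsCompact Λ ∧ IsInvariantSet f0 f1 Λ ∧ IsLocallyMaximal f0 f1 Λ ∧
  TransOn (F f0 f1) Λ ∧ IsHypContracting f0 f1 df0 df1 d Λ

/-- The entropy function `𝓗(p) = -p log p - (1-p) log (1-p)`. -/
noncomputable def entH (p : ℝ) : ℝ := -(p * Real.log p) - (1 - p) * Real.log (1 - p)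

section Aux
variable {f0 f1 df0 df1 : ℝ → ℝ} {d : ℝ}

lemma H1.f0_zero (h : H1 f0 f1 df0 df1 d) : f0 0 = 0 := by
  obtain ⟨t, ht, h0⟩ := h.surj0 (show (0:ℝ) ∈ Icc (0:ℝ) 1 by constructor <;> norm_num)
  have h1 : (0:ℝ) ≤ f0 0 := (h.maps0 (by constructor <;> norm_num)).1
  have h2 : f0 0 ≤ f0 t := h.mono0.monotone ht.1
  linarith [h0 ▸ h2]

lemma fin2_cases (i : Fin 2) : i = 0 ∨ i = 1 := by omega

lemma adm_mem {w : List (Fin 2)} {x : ℝ} (h : wordAdm f0 f1 d w x) : x ∈ Icc (0:ℝ) 1 := by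
  cases w with
  | nil => exact h
  | cons i v => exact h.1

lemma adm_up (h1 : H1 f0 f1 df0 df1 d) {w : List (Fin 2)} {x y : ℝ}
    (hx : wordAdm f0 f1 d w x) (hxy : x ≤ y) (hy1 : y ≤ 1) : wordAdm f0 f1 d w y := by
  induction w generalizing x y with
  | nil => exact ⟨le_trans hx.1 hxy, hy1⟩
  | cons i v ih =>
    obtain ⟨hxI, hxd, hxa⟩ := hx
    refine ⟨⟨le_trans hxI.1 hxy, hy1⟩, fun hi => le_trans (hxd hi) hxy, ?_⟩
    rcases fin2_cases i with hi | hi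
    · subst hi
      simp only [if_pos rfl] at hxa ⊢
      exact ih hxa (h1.mono0.monotone hxy) (h1.maps0 ⟨le_trans hxI.1 hxy, hy1⟩).2
    · subst hi
      simp only [show (1 : Fin 2) ≠ 0 by decide, if_neg, if_false] at hxa ⊢
      exact ih hxa (h1.mono1.monotone hxy)
        (h1.maps1 ⟨le_trans (hxd rfl) hxy, hy1⟩).2

lemma fWord_mem (h1 : H1 f0 f1 df0 df1 d) {w : List (Fin 2)} {x : ℝ}
    (hx : wordAdm f0 f1 d w x) : fWord f0 f1 w x ∈ Icc (0:ℝ) 1 := by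
  induction w generalizing x with
  | nil => exact hx
  | cons i v ih => exact ih hx.2.2

lemma fWord_mono (h1 : H1 f0 f1 df0 df1 d) (w : List (Fin 2)) : StrictMono (fWord f0 f1 w) := by
  induction w with
  | nil => exact fun a b h => h
  | cons i v ih =>
    intro a b hab
    rcases fin2_cases i with hi | hi <;> subst hi <;> simp only [fWord]
    · simpa using ih (h1.mono0 hab)
    · simpa using ih (h1.mono1 hab)

lemma hasDerivAt_fWord (h1 : H1 f0 f1 df0 df1 d) (w : List (Fin 2)) (x : ℝ) :
    HasDerivAt (fWord f0 f1 w) (fWordDeriv f0 f1 df0 df1 w x) x := by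
  induction w generalizing x with
  | nil => simp [fWord, fWordDeriv]; exact hasDerivAt_id' x
  | cons i v ih =>
    rcases fin2_cases i with hi | hi <;> subst hi <;>
      simp only [fWord, fWordDeriv, if_pos rfl, reduceIte]
    · have := (ih (f0 x)).comp x (h1.hasDeriv0 x)
      rw [mul_comm] at this; exact this
    · have := (ih (f1 x)).comp x (h1.hasDeriv1 x)
      rw [mul_comm] at this; exact this

lemma isClosed_IWord (h1 : H1 f0 f1 df0 df1 d) (w : List (Fin 2)) :
    IsClosed (IWord f0 f1 d w) := by
  induction w with
  | nil => exact isClosed_Icc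
  | cons i v ih =>
    have hc : Continuous (if i = 0 then f0 else f1) := by
      rcases fin2_cases i with hi | hi <;> subst hi
      · simp only [if_pos rfl]
        exact continuous_iff_continuousAt.2 fun x => (h1.hasDeriv0 x).differentiableAt.continuousAt
      · simp only [show (1:Fin 2) ≠ 0 by decide, if_false]
        exact continuous_iff_continuousAt.2 fun x => (h1.hasDeriv1 x).differentiableAt.continuousAt
    have : IWord f0 f1 d (i :: v) =
        (Icc (0:ℝ) 1 ∩ {x | i = 1 → d ≤ x}) ∩ (if i = 0 then f0 else f1) ⁻¹' (IWord f0 f1 d v) := by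
      ext x; simp [IWord, wordAdm, Set.mem_inter_iff, and_assoc]
    rw [this]
    refine IsClosed.inter (IsClosed.inter isClosed_Icc ?_) (ih.preimage hc)
    rcases fin2_cases i with hi | hi <;> subst hi
    · simp [show (0:Fin 2) ≠ 1 by decide]
    · simp; exact isClosed_Ici

lemma df0_pos (h1 : H1 f0 f1 df0 df1 d) (h2 : H2 df0 df1 d) {x : ℝ}
    (hx : x ∈ Icc (0:ℝ) 1) : 0 < df0 x := by
  rcases eq_or_lt_of_le hx.2 with h | h
  · rw [h]; exact h1.deriv0_one.1
  · exact lt_trans h1.deriv0_one.1 (h2.1 hx (by constructor <;> norm_num) h)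

lemma df1_pos (h1 : H1 f0 f1 df0 df1 d) (h2 : H2 df0 df1 d) {x : ℝ}
    (hx : x ∈ Icc d 1) : 0 < df1 x :=
  lt_of_lt_of_le h1.deriv1_one (h2.2 hx ⟨h1.d_mem.2.le, le_refl 1⟩ hx.2)

lemma deriv_pos (h1 : H1 f0 f1 df0 df1 d) (h2 : H2 df0 df1 d) {w : List (Fin 2)} {x : ℝ}
    (hx : wordAdm f0 f1 d w x) : 0 < fWordDeriv f0 f1 df0 df1 w x := by
  induction w generalizing x with
  | nil => norm_num [fWordDeriv]
  | cons i v ih =>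
    obtain ⟨hxI, hxd, hxa⟩ := hx
    rcases fin2_cases i with hi | hi <;> subst hi <;>
      simp only [fWordDeriv, if_pos rfl, show ((1:Fin 2) = 0) = False by simp, if_false]
    · exact mul_pos (df0_pos h1 h2 hxI) (ih hxa)
    · exact mul_pos (df1_pos h1 h2 ⟨hxd rfl, hxI.2⟩) (ih hxa)

lemma deriv_antitone (h1 : H1 f0 f1 df0 df1 d) (h2 : H2 df0 df1 d) {w : List (Fin 2)} {x y : ℝ}
    (hx : wordAdm f0 f1 d w x) (hy : wordAdm f0 f1 d w y) (hxy : x ≤ y) :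
    fWordDeriv f0 f1 df0 df1 w y ≤ fWordDeriv f0 f1 df0 df1 w x := by
  induction w generalizing x y with
  | nil => simp [fWordDeriv]
  | cons i v ih =>
    obtain ⟨hxI, hxd, hxa⟩ := hx
    obtain ⟨hyI, hyd, hya⟩ := hy
    rcases fin2_cases i with hi | hi <;> subst hi <;>
      simp only [fWordDeriv, if_pos rfl, if_neg (show (1:Fin 2) ≠ 0 by decide), if_true, eq_self_iff_true] at hxa hya ⊢
    · refine mul_le_mul ?_ (ih hxa hya (h1.mono0.monotone hxy)) (le_of_lt (deriv_pos h1 h2 hya))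
        (le_of_lt (df0_pos h1 h2 hxI))
      rcases eq_or_lt_of_le hxy with h | h
      · rw [h]
      · exact le_of_lt (h2.1 hxI hyI h)
    · exact mul_le_mul (h2.2 ⟨hxd rfl, hxI.2⟩ ⟨hyd rfl, hyI.2⟩ hxy)
        (ih hxa hya (h1.mono1.monotone hxy)) (le_of_lt (deriv_pos h1 h2 hya))
        (le_of_lt (df1_pos h1 h2 ⟨hxd rfl, hxI.2⟩))

lemma log_deriv_gap {M : ℝ} (h1 : H1 f0 f1 df0 df1 d) (h2 : H2 df0 df1 d)
    (hM : H2plus df0 df1 d M) {w : List (Fin 2)} (hne : w ≠ []) {x y : ℝ}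
    (hx : wordAdm f0 f1 d w x) (hy : wordAdm f0 f1 d w y) (hxy : x < y) :
    M⁻¹ * (y - x) ≤ Real.log (fWordDeriv f0 f1 df0 df1 w x) -
      Real.log (fWordDeriv f0 f1 df0 df1 w y) := by
  cases w with
  | nil => exact absurd rfl hne
  | cons i v =>
    obtain ⟨hxI, hxd, hxa⟩ := hx
    obtain ⟨hyI, hyd, hya⟩ := hy
    rcases fin2_cases i with hi | hi <;> subst hi <;>
      simp only [fWordDeriv, if_pos rfl, if_neg (show (1:Fin 2) ≠ 0 by decide), if_true, eq_self_iff_true] at hxa hya ⊢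
    · have hgap := (hM.2.1 x hxI y hyI hxy).1
      have hpx : (0:ℝ) < df0 x := df0_pos h1 h2 hxI
      have hpy : (0:ℝ) < df0 y := df0_pos h1 h2 hyI
      have hvx : (0:ℝ) < fWordDeriv f0 f1 df0 df1 v (f0 x) := deriv_pos h1 h2 hxa
      have hvy : (0:ℝ) < fWordDeriv f0 f1 df0 df1 v (f0 y) := deriv_pos h1 h2 hya
      have hmono : fWordDeriv f0 f1 df0 df1 v (f0 y) ≤ fWordDeriv f0 f1 df0 df1 v (f0 x) :=
        deriv_antitone h1 h2 hxa hya (h1.mono0.monotone hxy.le)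
      have hlog : Real.log (fWordDeriv f0 f1 df0 df1 v (f0 y)) ≤
          Real.log (fWordDeriv f0 f1 df0 df1 v (f0 x)) := Real.log_le_log hvy hmono
      rw [Real.log_mul hpx.ne' hvx.ne', Real.log_mul hpy.ne' hvy.ne']
      linarith
    · have hxd1 : x ∈ Icc d 1 := ⟨hxd rfl, hxI.2⟩
      have hyd1 : y ∈ Icc d 1 := ⟨hyd rfl, hyI.2⟩
      have hgap := (hM.2.2 x hxd1 y hyd1 hxy).1
      have hpx : (0:ℝ) < df1 x := df1_pos h1 h2 hxd1
      have hpy : (0:ℝ) < df1 y := df1_pos h1 h2 hyd1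
      have hvx : (0:ℝ) < fWordDeriv f0 f1 df0 df1 v (f1 x) := deriv_pos h1 h2 hxa
      have hvy : (0:ℝ) < fWordDeriv f0 f1 df0 df1 v (f1 y) := deriv_pos h1 h2 hya
      have hmono : fWordDeriv f0 f1 df0 df1 v (f1 y) ≤ fWordDeriv f0 f1 df0 df1 v (f1 x) :=
        deriv_antitone h1 h2 hxa hya (h1.mono1.monotone hxy.le)
      have hlog : Real.log (fWordDeriv f0 f1 df0 df1 v (f1 y)) ≤
          Real.log (fWordDeriv f0 f1 df0 df1 v (f1 x)) := Real.log_le_log hvy hmono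
      rw [Real.log_mul hpx.ne' hvx.ne', Real.log_mul hpy.ne' hvy.ne']
      linarith

lemma deriv_exp_gap {M : ℝ} (h1 : H1 f0 f1 df0 df1 d) (h2 : H2 df0 df1 d)
    (hM : H2plus df0 df1 d M) {w : List (Fin 2)} (hne : w ≠ []) {x y : ℝ}
    (hx : wordAdm f0 f1 d w x) (hy : wordAdm f0 f1 d w y) (hxy : x ≤ y) :
    fWordDeriv f0 f1 df0 df1 w y ≤
      fWordDeriv f0 f1 df0 df1 w x * Real.exp (-(M⁻¹ * (y - x))) := by
  rcases eq_or_lt_of_le hxy with h | h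
  · subst h; simpa using le_of_eq rfl
  · have hgap := log_deriv_gap h1 h2 hM hne hx hy h
    have hvx : (0:ℝ) < fWordDeriv f0 f1 df0 df1 w x := deriv_pos h1 h2 hx
    have hvy : (0:ℝ) < fWordDeriv f0 f1 df0 df1 w y := deriv_pos h1 h2 hy
    have : Real.log (fWordDeriv f0 f1 df0 df1 w y) ≤
        Real.log (fWordDeriv f0 f1 df0 df1 w x) + (-(M⁻¹ * (y - x))) := by linarith
    calc fWordDeriv f0 f1 df0 df1 w y = Real.exp (Real.log (fWordDeriv f0 f1 df0 df1 w y)) :=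
        (Real.exp_log hvy).symm
    _ ≤ Real.exp (Real.log (fWordDeriv f0 f1 df0 df1 w x) + (-(M⁻¹ * (y - x)))) :=
        Real.exp_le_exp.2 this
    _ = fWordDeriv f0 f1 df0 df1 w x * Real.exp (-(M⁻¹ * (y - x))) := by
        rw [Real.exp_add, Real.exp_log hvx]

lemma fWord_continuous (h1 : H1 f0 f1 df0 df1 d) (w : List (Fin 2)) :
    Continuous (fWord f0 f1 w) :=
  continuous_iff_continuousAt.2 fun x => (hasDerivAt_fWord h1 w x).differentiableAt.continuousAt

lemma adm_zero_fix (h1 : H1 f0 f1 df0 df1 d) {w : List (Fin 2)}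
    (hw : wordAdm f0 f1 d w 0) : fWord f0 f1 w 0 = 0 := by
  induction w with
  | nil => simp [fWord]
  | cons i v ih =>
    obtain ⟨h0, hd, ha⟩ := hw
    rcases fin2_cases i with hi | hi <;> subst hi
    · simp only [fWord, if_pos rfl, if_true, eq_self_iff_true] at ha ⊢
      rw [h1.f0_zero] at ha ⊢
      exact ih ha
    · exact absurd (hd rfl) (not_le.2 h1.d_mem.1)

lemma adm_drop {w : List (Fin 2)} {x : ℝ} (k : ℕ) (hw : wordAdm f0 f1 d w x) :
    wordAdm f0 f1 d (w.drop k) (fWord f0 f1 (w.take k) x) := by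
  induction k generalizing w x with
  | zero => simpa [fWord] using hw
  | succ k ih =>
    cases w with
    | nil => simpa [fWord] using hw
    | cons i v =>
      simp only [List.take_succ_cons, List.drop_succ_cons, fWord]
      exact ih hw.2.2

lemma fWord_take_drop {w : List (Fin 2)} {x : ℝ} (k : ℕ) :
    fWord f0 f1 w x = fWord f0 f1 (w.drop k) (fWord f0 f1 (w.take k) x) := by
  induction k generalizing w x with
  | zero => simp [fWord]
  | succ k ih =>
    cases w with
    | nil => simp [fWord]
    | cons i v =>
      simp only [List.take_succ_cons, List.drop_succ_cons, fWord]
      exact ih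

lemma adm_of_strict (h1 : H1 f0 f1 df0 df1 d) {w : List (Fin 2)} {s x : ℝ}
    (hs0 : 0 ≤ s) (hsx : s ≤ x) (hx : wordAdm f0 f1 d w x)
    (hd : ∀ k, k < w.length → w.getD k 0 = 1 → d ≤ fWord f0 f1 (w.take k) s) :
    wordAdm f0 f1 d w s := by
  induction w generalizing s x with
  | nil => exact ⟨hs0, le_trans hsx hx.2⟩
  | cons i v ih =>
    obtain ⟨hxI, hxd, hxa⟩ := hx
    have hsI : s ∈ Icc (0:ℝ) 1 := ⟨hs0, le_trans hsx hxI.2⟩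
    have hds : i = 1 → d ≤ s := by
      intro hi
      have := hd 0 (by simp) (by simpa using hi)
      simpa [fWord] using this
    refine ⟨hsI, hds, ?_⟩
    have hd' : ∀ k, k < v.length → v.getD k 0 = 1 →
        d ≤ fWord f0 f1 (v.take k) ((if i = 0 then f0 else f1) s) := by
      intro k hk h1k
      have := hd (k + 1) (by simpa using Nat.succ_lt_succ hk) (by simpa using h1k)
      simpa [List.take_succ_cons, fWord] using this
    rcases fin2_cases i with hi | hi <;> subst hi <;>
      simp only [if_pos rfl, if_neg (show (1:Fin 2) ≠ 0 by decide)] at hxa hd' ⊢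
    · refine ih (x := f0 x) ?_ (h1.mono0.monotone hsx) hxa hd'
      rw [← h1.f0_zero]
      exact h1.mono0.monotone hs0
    · refine ih (x := f1 x) ?_ (h1.mono1.monotone hsx) hxa hd'
      rw [← h1.f1_d]
      exact h1.mono1.monotone (hds rfl)

lemma bddBelow_IWord (w : List (Fin 2)) : BddBelow (IWord f0 f1 d w) :=
  ⟨0, fun x hx => (adm_mem hx).1⟩

lemma aWord_mem (h1 : H1 f0 f1 df0 df1 d) {w : List (Fin 2)}
    (hne : (IWord f0 f1 d w).Nonempty) : aWord f0 f1 d w ∈ IWord f0 f1 d w :=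
  (isClosed_IWord h1 w).csInf_mem hne (bddBelow_IWord w)

lemma IWord_eq (h1 : H1 f0 f1 df0 df1 d) {w : List (Fin 2)}
    (hne : (IWord f0 f1 d w).Nonempty) : IWord f0 f1 d w = Icc (aWord f0 f1 d w) 1 := by
  ext x
  constructor
  · exact fun hx => ⟨csInf_le (bddBelow_IWord w) hx, (adm_mem hx).2⟩
  · exact fun hx => adm_up h1 (aWord_mem h1 hne) hx.1 hx.2

lemma fWord_aWord (h1 : H1 f0 f1 df0 df1 d) {w : List (Fin 2)}
    (hne : (IWord f0 f1 d w).Nonempty) : fWord f0 f1 w (aWord f0 f1 d w) = 0 := by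
  set a := aWord f0 f1 d w with ha
  have haI : wordAdm f0 f1 d w a := aWord_mem h1 hne
  by_cases hk : ∃ k, k < w.length ∧ w.getD k 0 = 1 ∧ fWord f0 f1 (w.take k) a = d
  · obtain ⟨k, hk, h1k, hda⟩ := hk
    have hdrop := adm_drop (f0 := f0) (f1 := f1) (d := d) k haI
    rw [hda, List.drop_eq_getElem_cons hk, ← List.getD_eq_getElem w 0 hk, h1k] at hdrop
    have hadm0 : wordAdm f0 f1 d (w.drop (k+1)) 0 := by
      have := hdrop.2.2
      rw [if_neg (show (1:Fin 2) ≠ 0 by decide), h1.f1_d] at this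
      exact this
    rw [fWord_take_drop (w := w) (x := a) k, hda,
      List.drop_eq_getElem_cons hk, ← List.getD_eq_getElem w 0 hk, h1k]
    show fWord f0 f1 (w.drop (k+1)) ((if (1:Fin 2) = 0 then f0 else f1) d) = 0
    rw [if_neg (show (1:Fin 2) ≠ 0 by decide), h1.f1_d]
    exact adm_zero_fix h1 hadm0
  · by_cases ha0 : a = 0
    · rw [ha0]
      exact adm_zero_fix h1 (ha0 ▸ haI)
    · exfalso
      have hapos : (0:ℝ) < a := lt_of_le_of_ne (adm_mem haI).1 (Ne.symm ha0)
      have hstrict : ∀ k, k < w.length → w.getD k 0 = 1 → d < fWord f0 f1 (w.take k) a := by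
        intro k hkl h1k
        have hdrop := adm_drop (f0 := f0) (f1 := f1) (d := d) k haI
        rw [List.drop_eq_getElem_cons hkl, ← List.getD_eq_getElem w 0 hkl, h1k] at hdrop
        have hle : d ≤ fWord f0 f1 (w.take k) a := hdrop.2.1 rfl
        exact lt_of_le_of_ne hle fun he => hk ⟨k, hkl, h1k, he.symm⟩
      have hev1 : ∀ᶠ s in nhdsWithin a (Iio a), 0 < s :=
        eventually_nhdsWithin_of_eventually_nhds (eventually_gt_nhds hapos)
      have hev2 : ∀ᶠ s in nhdsWithin a (Iio a),
          ∀ k ∈ Finset.range w.length, (w.getD k 0 = 1 → d < fWord f0 f1 (w.take k) s) := by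
        rw [Filter.eventually_all_finset]
        intro k hkmem
        by_cases h1k : w.getD k 0 = 1
        · have hc : ContinuousAt (fWord f0 f1 (w.take k)) a :=
            (fWord_continuous h1 (w.take k)).continuousAt
          have hmem : fWord f0 f1 (w.take k) ⁻¹' Ioi d ∈ nhds a :=
            hc.preimage_mem_nhds (Ioi_mem_nhds (hstrict k (Finset.mem_range.1 hkmem) h1k))
          have hev : ∀ᶠ s in nhds a, d < fWord f0 f1 (w.take k) s := hmem
          exact eventually_nhdsWithin_of_eventually_nhds (hev.mono fun s hs _ => hs)
        · exact Filter.Eventually.of_forall fun s hs => absurd hs h1k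
      have hev3 : ∀ᶠ s in nhdsWithin a (Iio a), s < a := eventually_mem_nhdsWithin
      obtain ⟨s, hs0, hsP, hsa⟩ := (hev1.and (hev2.and hev3)).exists
      have hadm : wordAdm f0 f1 d w s := by
        refine adm_of_strict h1 hs0.le hsa.le haI fun k hkl h1k => ?_
        exact (hsP k (Finset.mem_range.2 hkl) h1k).le
      exact absurd (csInf_le (bddBelow_IWord w) hadm) (not_le.2 hsa)

lemma monotoneOn_of_hasDerivAt {F F' : ℝ → ℝ} (hF : ∀ s, HasDerivAt F (F' s) s)
    {u v : ℝ} (h0 : ∀ s ∈ Icc u v, 0 ≤ F' s) : MonotoneOn F (Icc u v) := by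
  refine monotoneOn_of_deriv_nonneg (convex_Icc u v) ?_ ?_ ?_
  · exact (continuous_iff_continuousAt.2 fun x =>
      (hF x).differentiableAt.continuousAt).continuousOn
  · exact fun s _ => (hF s).differentiableAt.differentiableWithinAt
  · intro s hs
    rw [(hF s).deriv]
    exact h0 s (interior_subset hs)

lemma fWord_incr_le (h1 : H1 f0 f1 df0 df1 d) (h2 : H2 df0 df1 d) {w : List (Fin 2)}
    {c p q : ℝ} (hc : wordAdm f0 f1 d w c) (hmem : ∀ s ∈ Icc p q, wordAdm f0 f1 d w s)
    (hcp : c ≤ p) (hpq : p ≤ q) :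
    fWord f0 f1 w q - fWord f0 f1 w p ≤ fWordDeriv f0 f1 df0 df1 w c * (q - p) := by
  have hmono : MonotoneOn (fun s => fWordDeriv f0 f1 df0 df1 w c * s - fWord f0 f1 w s)
      (Icc p q) := by
    refine monotoneOn_of_hasDerivAt
      (F' := fun s => fWordDeriv f0 f1 df0 df1 w c - fWordDeriv f0 f1 df0 df1 w s) ?_ ?_
    · intro s
      have := ((hasDerivAt_id s).const_mul (fWordDeriv f0 f1 df0 df1 w c)).sub
        (hasDerivAt_fWord h1 w s)
      simp only [mul_one] at this; exact this
    · intro s hs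
      have := deriv_antitone h1 h2 hc (hmem s hs) (le_trans hcp hs.1)
      linarith
  have := hmono (left_mem_Icc.2 hpq) (right_mem_Icc.2 hpq) hpq
  dsimp at this
  linarith

lemma fWord_incr_ge (h1 : H1 f0 f1 df0 df1 d) (h2 : H2 df0 df1 d) {w : List (Fin 2)}
    {c p q : ℝ} (hc : wordAdm f0 f1 d w c) (hmem : ∀ s ∈ Icc p q, wordAdm f0 f1 d w s)
    (hqc : q ≤ c) (hpq : p ≤ q) :
    fWordDeriv f0 f1 df0 df1 w c * (q - p) ≤ fWord f0 f1 w q - fWord f0 f1 w p := by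
  have hmono : MonotoneOn (fun s => fWord f0 f1 w s - fWordDeriv f0 f1 df0 df1 w c * s)
      (Icc p q) := by
    refine monotoneOn_of_hasDerivAt
      (F' := fun s => fWordDeriv f0 f1 df0 df1 w s - fWordDeriv f0 f1 df0 df1 w c) ?_ ?_
    · intro s
      have := (hasDerivAt_fWord h1 w s).sub
        ((hasDerivAt_id s).const_mul (fWordDeriv f0 f1 df0 df1 w c))
      simp only [mul_one] at this; exact this
    · intro s hs
      have := deriv_antitone h1 h2 (hmem s hs) hc (le_trans hs.2 hqc)
      linarith
  have := hmono (left_mem_Icc.2 hpq) (right_mem_Icc.2 hpq) hpq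
  dsimp at this
  linarith

lemma exp_upper {v : ℝ} (hv0 : 0 ≤ v) (hv1 : v ≤ 1) : Real.exp (-v) ≤ 1 - v / 2 := by
  have h1 : (1:ℝ) + v ≤ Real.exp v := by linarith [Real.add_one_le_exp v]
  have h2 : (0:ℝ) < 1 + v := by linarith
  have h3 : Real.exp (-v) = 1 / Real.exp v := by
    rw [Real.exp_neg]; ring
  have h4 : (1:ℝ) / Real.exp v ≤ 1 / (1 + v) :=
    one_div_le_one_div_of_le h2 h1
  have h5 : (1:ℝ) / (1 + v) ≤ 1 - v / 2 := by
    rw [div_le_iff₀ h2]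
    nlinarith
  linarith

set_option maxHeartbeats 1000000 in
lemma key_est {M : ℝ} (h1 : H1 f0 f1 df0 df1 d) (h2 : H2 df0 df1 d)
    (hM : H2plus df0 df1 d M) {w : List (Fin 2)} (hne : w ≠ []) {p x δ : ℝ}
    (hp : wordAdm f0 f1 d w p) (hx : wordAdm f0 f1 d w x) (hpx : p < x) (hδ : 0 < δ)
    (hφp : |fWord f0 f1 w p - p| ≤ δ) (hφx : |fWord f0 f1 w x - x| ≤ δ)
    (hφm : fWord f0 f1 w ((p + x) / 2) - (p + x) / 2 ≤ δ) :
    (x - p) ^ 2 ≤ 192 * M * δ := by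
  have hMpos : (0:ℝ) < M := lt_trans zero_lt_one hM.1
  set g := fWord f0 f1 w with hg
  set G := fWordDeriv f0 f1 df0 df1 w with hG
  set L := x - p with hL
  set m := (p + x) / 2 with hm
  set m' := m + L / 4 with hm'
  have hLpos : 0 < L := hL ▸ sub_pos.2 hpx
  have hL1 : L ≤ 1 := by
    have h0p : (0:ℝ) ≤ p := (adm_mem hp).1
    have hx1 : x ≤ 1 := (adm_mem hx).2
    rw [hL]; linarith
  have hmem : ∀ s ∈ Icc p x, wordAdm f0 f1 d w s := fun s hs =>
    adm_up h1 hp hs.1 (le_trans hs.2 (adm_mem hx).2)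
  have hmIcc : m ∈ Icc p x := ⟨by rw [hm]; linarith, by rw [hm]; linarith⟩
  have hm'Icc : m' ∈ Icc p x :=
    ⟨by rw [hm', hm, hL]; linarith, by rw [hm', hm, hL]; linarith⟩
  have hmadm : wordAdm f0 f1 d w m := hmem m hmIcc
  have hm'adm : wordAdm f0 f1 d w m' := hmem m' hm'Icc
  have hGm_pos : 0 < G m := deriv_pos h1 h2 hmadm
  have hGm'_pos : 0 < G m' := deriv_pos h1 h2 hm'adm
  -- Step A : G m * (L/2) ≤ g m - g p ≤ L/2 + 2δ
  have hA1 : G m * (m - p) ≤ g m - g p :=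
    fWord_incr_ge h1 h2 hmadm (fun s hs => hmem s ⟨hs.1, le_trans hs.2 hmIcc.2⟩)
      (le_refl m) hmIcc.1
  have habs_p : -δ ≤ g p - p ∧ g p - p ≤ δ := abs_le.1 hφp
  have habs_x : -δ ≤ g x - x ∧ g x - x ≤ δ := abs_le.1 hφx
  have hA2 : g m - g p ≤ L / 2 + 2 * δ := by
    have : m - p = L / 2 := by rw [hm, hL]; ring
    nlinarith [hφm, habs_p.1]
  have hGmL : G m * L ≤ L + 4 * δ := by
    have hmp : m - p = L / 2 := by rw [hm, hL]; ring
    nlinarith [hA1, hA2]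
  -- Step B : g m' - g m ≤ G m * (L/4)
  have hB : g m' - g m ≤ G m * (m' - m) :=
    fWord_incr_le h1 h2 hmadm (fun s hs => hmem s ⟨le_trans hmIcc.1 hs.1, le_trans hs.2 hm'Icc.2⟩)
      (le_refl m) (by rw [hm']; linarith)
  -- Step C : g x - g m' ≤ G m' * (L/4)
  have hC : g x - g m' ≤ G m' * (x - m') :=
    fWord_incr_le h1 h2 hm'adm (fun s hs => hmem s ⟨le_trans hm'Icc.1 hs.1, hs.2⟩)
      (le_refl m') (by rw [hm', hm, hL]; linarith)
  -- Step D : G m' ≤ G m * exp (-(M⁻¹ * (L/4)))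
  have hD : G m' ≤ G m * Real.exp (-(M⁻¹ * (m' - m))) :=
    deriv_exp_gap h1 h2 hM hne hmadm hm'adm (by rw [hm']; linarith)
  -- Step E : exp bound
  have hv0 : 0 ≤ M⁻¹ * (L / 4) := by positivity
  have hv1 : M⁻¹ * (L / 4) ≤ 1 := by
    have hMinv : M⁻¹ ≤ 1 := by
      rw [inv_le_one_iff₀]; right; exact hM.1.le
    nlinarith
  have hE : Real.exp (-(M⁻¹ * (L / 4))) ≤ 1 - M⁻¹ * (L / 4) / 2 := exp_upper hv0 hv1
  -- Step F : total
  have hm'm : m' - m = L / 4 := by rw [hm']; ring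
  have hxm' : x - m' = L / 4 := by rw [hm', hm, hL]; ring
  have hGm' : G m' ≤ G m * (1 - M⁻¹ * (L / 4) / 2) := by
    calc G m' ≤ G m * Real.exp (-(M⁻¹ * (L / 4))) := by rw [← hm'm]; exact hD
    _ ≤ G m * (1 - M⁻¹ * (L / 4) / 2) := by
        exact mul_le_mul_of_nonneg_left hE hGm_pos.le
  have hfactor : 0 ≤ 1 - M⁻¹ * (L / 4) / 2 := by nlinarith
  -- g x - g p ≥ L - 2δ
  have hF : L - 2 * δ ≤ g x - g p := by
    have : g x - g p = L + (g x - x) - (g p - p) := by rw [hL]; ring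
    linarith [habs_x.1, habs_p.2]
  -- combine
  have hCbound : g x - g m' ≤ (L + 4 * δ) * (1 - M⁻¹ * (L / 4) / 2) / 4 := by
    have h1' : G m' * (L / 4) ≤ G m * (1 - M⁻¹ * (L / 4) / 2) * (L / 4) :=
      mul_le_mul_of_nonneg_right hGm' (by linarith)
    have h2' : G m * (1 - M⁻¹ * (L / 4) / 2) * (L / 4) ≤
        (L + 4 * δ) * (1 - M⁻¹ * (L / 4) / 2) / 4 := by
      nlinarith [hGmL, hfactor, hGm_pos.le]
    rw [hxm'] at hC
    linarith
  have hBbound : g m' - g m ≤ (L + 4 * δ) / 4 := by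
    rw [hm'm] at hB
    nlinarith [hGmL]
  have htotal : L - 2 * δ ≤ L / 2 + 2 * δ + (L + 4 * δ) / 4 +
      (L + 4 * δ) * (1 - M⁻¹ * (L / 4) / 2) / 4 := by
    linarith [hA2, hBbound, hCbound, hF]
  have hMinvL : M⁻¹ * L ^ 2 ≤ 192 * δ * M⁻¹ * M := by
    have hexp : (L + 4 * δ) * (1 - M⁻¹ * (L / 4) / 2) / 4 ≤
        L / 4 + δ - M⁻¹ * L ^ 2 / 32 := by
      nlinarith [hv0, hLpos.le, hδ.le]
    have : M⁻¹ * L ^ 2 / 32 ≤ 6 * δ := by linarith [htotal, hexp]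
    have hMM : M⁻¹ * M = 1 := inv_mul_cancel₀ hMpos.ne'
    nlinarith
  have hMM : M⁻¹ * M = 1 := inv_mul_cancel₀ hMpos.ne'
  calc (x - p) ^ 2 = L ^ 2 := by rw [hL]
  _ = M * (M⁻¹ * L ^ 2) := by rw [← mul_assoc, mul_inv_cancel₀ hMpos.ne', one_mul]
  _ ≤ M * (192 * δ * M⁻¹ * M) := by
      exact mul_le_mul_of_nonneg_left hMinvL hMpos.le
  _ = 192 * M * δ * (M⁻¹ * M) := by ring
  _ = 192 * M * δ := by rw [hMM]; ring

end Aux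

/-! ## Statement 16 -/

set_option maxHeartbeats 1000000 in
theorem statement_16 (f0 f1 df0 df1 : ℝ → ℝ) (d : ℝ) (hH1 : H1 f0 f1 df0 df1 d)
    (hH2 : H2 df0 df1 d) (hH2p : ∃ M : ℝ, H2plus df0 df1 d M) :
    ∃ h : ℝ → ℝ,
      (∀ t : ℝ, 0 < t → 0 < h t) ∧
      Tendsto h (nhdsWithin 0 (Ioi 0)) (nhds 0) ∧
      ∀ w : List (Fin 2), w ≠ [] →
        (∃ p : ℝ, wordAdm f0 f1 d w p ∧ fWord f0 f1 w p = p) →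
        ∀ ε : ℝ, 0 < ε → ∀ x : ℝ, x ∈ Icc (aWord f0 f1 d w) 1 →
          |fWord f0 f1 w x - x| < ε →
          ∃ p : ℝ, wordAdm f0 f1 d w p ∧ fWord f0 f1 w p = p ∧ |x - p| ≤ h ε := by
  obtain ⟨M, hM⟩ := hH2p
  have hM1 : (1:ℝ) < M := hM.1
  have hMpos : (0:ℝ) < M := lt_trans zero_lt_one hM1
  refine ⟨fun ε => 14 * Real.sqrt (M * ε), ?_, ?_, ?_⟩
  · intro t ht
    have : 0 < Real.sqrt (M * t) := Real.sqrt_pos.2 (mul_pos hMpos ht)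
    dsimp only
    linarith
  · have hc : Continuous fun ε : ℝ => 14 * Real.sqrt (M * ε) :=
      continuous_const.mul (Real.continuous_sqrt.comp (continuous_const.mul continuous_id))
    have h0 : 14 * Real.sqrt (M * 0) = 0 := by simp
    have := (hc.tendsto 0).mono_left (nhdsWithin_le_nhds (s := Ioi (0:ℝ)))
    rwa [h0] at this
  · intro w hne hfix ε hε x hxIcc hclose
    obtain ⟨p0, hp0adm, hp0fix⟩ := hfix
    have hne' : (IWord f0 f1 d w).Nonempty := ⟨p0, hp0adm⟩
    have hIeq := IWord_eq hH1 hne'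
    have hxadm : wordAdm f0 f1 d w x := by
      have : x ∈ IWord f0 f1 d w := by rw [hIeq]; exact hxIcc
      exact this
    set g := fWord f0 f1 w with hg
    set G := fWordDeriv f0 f1 df0 df1 w with hG
    -- helper to conclude from key_est
    have hsqrt : Real.sqrt (192 * (M * ε)) ≤ 14 * Real.sqrt (M * ε) := by
      rw [Real.sqrt_mul (by norm_num : (0:ℝ) ≤ 192)]
      have h14 : Real.sqrt 192 ≤ 14 := by
        rw [show (14:ℝ) = Real.sqrt 196 by
          rw [show (196:ℝ) = 14 ^ 2 by norm_num, Real.sqrt_sq (by norm_num)]]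
        exact Real.sqrt_le_sqrt (by norm_num)
      have := Real.sqrt_nonneg (M * ε)
      nlinarith
    have conclude : ∀ p : ℝ, wordAdm f0 f1 d w p → g p = p → (x - p) ^ 2 ≤ 192 * M * ε →
        ∃ p : ℝ, wordAdm f0 f1 d w p ∧ fWord f0 f1 w p = p ∧
          |x - p| ≤ 14 * Real.sqrt (M * ε) := by
      intro p hpadm hpfix hsq
      refine ⟨p, hpadm, hpfix, ?_⟩
      have h1' : |x - p| = Real.sqrt ((x - p) ^ 2) := (Real.sqrt_sq_eq_abs _).symm
      rw [h1']
      calc Real.sqrt ((x - p) ^ 2) ≤ Real.sqrt (192 * (M * ε)) :=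
        Real.sqrt_le_sqrt (by linarith [hsq])
      _ ≤ 14 * Real.sqrt (M * ε) := hsqrt
    by_cases hfx : g x = x
    · exact conclude x hxadm hfx (by nlinarith [mul_pos hMpos hε])
    -- facts
    have h1adm : wordAdm f0 f1 d w 1 := adm_up hH1 hxadm hxIcc.2 le_rfl
    have haadm : wordAdm f0 f1 d w (aWord f0 f1 d w) := aWord_mem hH1 hne'
    have ha0 : 0 ≤ aWord f0 f1 d w := (adm_mem haadm).1
    have hax : aWord f0 f1 d w ≤ x := hxIcc.1
    have hga : g (aWord f0 f1 d w) = 0 := fWord_aWord hH1 hne'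
    have hφa : g (aWord f0 f1 d w) - aWord f0 f1 d w ≤ 0 := by rw [hga]; linarith
    have hφ1 : g 1 - 1 ≤ 0 := by
      have := (fWord_mem hH1 h1adm).2
      linarith
    have hφcont : Continuous fun s => g s - s := (fWord_continuous hH1 w).sub continuous_id
    have hadm_of : ∀ s, aWord f0 f1 d w ≤ s → s ≤ 1 → wordAdm f0 f1 d w s := fun s h1s h2s => by
      have : s ∈ IWord f0 f1 d w := by rw [hIeq]; exact ⟨h1s, h2s⟩
      exact this
    have habsx : |g x - x| ≤ ε := hclose.le
    -- monotonicity helpers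
    have hanti : G x ≤ 1 → ∀ s t, x ≤ s → s ≤ t → t ≤ 1 → g t - t ≤ g s - s := by
      intro hGx s t hxs hst ht1
      have hmono : MonotoneOn (fun r => r - g r) (Icc s t) := by
        refine monotoneOn_of_hasDerivAt (F' := fun r => 1 - G r) ?_ ?_
        · intro r
          have := (hasDerivAt_id r).sub (hasDerivAt_fWord hH1 w r)
          exact this
        · intro r hr
          have hradm : wordAdm f0 f1 d w r :=
            hadm_of r (le_trans hax (le_trans hxs hr.1)) (le_trans hr.2 ht1)
          have := deriv_antitone hH1 hH2 hxadm hradm (le_trans hxs hr.1)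
          linarith
      have := hmono (left_mem_Icc.2 hst) (right_mem_Icc.2 hst) hst
      dsimp at this
      linarith
    have hmonoφ : 1 ≤ G x → ∀ s t, aWord f0 f1 d w ≤ s → s ≤ t → t ≤ x →
        g s - s ≤ g t - t := by
      intro hGx s t has hst htx
      have hmono : MonotoneOn (fun r => g r - r) (Icc s t) := by
        refine monotoneOn_of_hasDerivAt (F' := fun r => G r - 1) ?_ ?_
        · intro r
          have := (hasDerivAt_fWord hH1 w r).sub (hasDerivAt_id r)
          exact this
        · intro r hr
          have hradm : wordAdm f0 f1 d w r :=
            hadm_of r (le_trans has hr.1) (le_trans hr.2 (le_trans htx hxIcc.2))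
          have := deriv_antitone hH1 hH2 hradm hxadm (le_trans hr.2 htx)
          linarith
      have := hmono (left_mem_Icc.2 hst) (right_mem_Icc.2 hst) hst
      dsimp at this
      linarith
    have hap0 : aWord f0 f1 d w ≤ p0 := by
      have : p0 ∈ Icc (aWord f0 f1 d w) 1 := hIeq ▸ hp0adm
      exact this.1
    have hp01 : p0 ≤ 1 := (adm_mem hp0adm).2
    rcases le_or_gt (g x) x with hsgn | hsgn
    · -- φ x < 0 (since ≠ 0)
      have hφxneg : g x - x < 0 := sub_neg.2 (lt_of_le_of_ne hsgn hfx)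
      rcases le_total (G x) 1 with hGx | hGx
      · -- Subcase 3 : zero to the left
        have hp0x : p0 < x := by
          rcases lt_or_ge p0 x with h | h
          · exact h
          · exfalso
            have hzz := hanti hGx x p0 le_rfl h hp01
            rw [hp0fix] at hzz
            simp only [sub_self] at hzz
            linarith
        set Z := {s : ℝ | s ∈ Icc p0 x ∧ g s - s = 0} with hZ
        have hZclosed : IsClosed Z := by
          have hZe : Z = Icc p0 x ∩ (fun s => g s - s) ⁻¹' {0} := by
            ext s
            simp [hZ, Set.mem_inter_iff, Set.mem_preimage]
          rw [hZe]
          exact isClosed_Icc.inter (isClosed_singleton.preimage hφcont)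
        have hZne : Z.Nonempty := ⟨p0, ⟨le_rfl, hp0x.le⟩, by rw [hp0fix]; ring⟩
        have hZbdd : BddAbove Z := ⟨x, fun s hs => hs.1.2⟩
        set p := sSup Z with hp
        have hpZ : p ∈ Z := hZclosed.csSup_mem hZne hZbdd
        have hpfix : g p = p := by have := hpZ.2; linarith
        have hpadm : wordAdm f0 f1 d w p :=
          hadm_of p (le_trans hap0 hpZ.1.1) (le_trans hpZ.1.2 hxIcc.2)
        have hpx : p < x := lt_of_le_of_ne hpZ.1.2 fun he => hfx (he ▸ hpfix)
        set m := (p + x) / 2 with hm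
        have hpm : p < m := by rw [hm]; linarith
        have hmx : m < x := by rw [hm]; linarith
        have hφm : g m - m < 0 := by
          by_contra hc
          push_neg at hc
          have hIVT := intermediate_value_Icc' hmx.le (hφcont.continuousOn (s := Icc m x))
          obtain ⟨t, htIcc, htfix⟩ := hIVT (⟨hφxneg.le, hc⟩ : (0:ℝ) ∈ Icc (g x - x) (g m - m))
          dsimp at htfix
          have htZ : t ∈ Z :=
            ⟨⟨le_trans hpZ.1.1 (le_trans hpm.le htIcc.1), htIcc.2⟩, htfix⟩
          have := le_csSup hZbdd htZ
          linarith [htIcc.1]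
        refine conclude p hpadm hpfix ?_
        exact key_est hH1 hH2 hM hne hpadm hxadm hpx hε
          (by simp only [← hg]; rw [hpfix]; simp [hε.le]) habsx
          (by simp only [← hg, ← hm]; linarith)
      · -- Subcase 4 : zero to the right
        have hxp0 : x < p0 := by
          rcases lt_or_ge x p0 with h | h
          · exact h
          · exfalso
            have hzz := hmonoφ hGx p0 x hap0 h le_rfl
            rw [hp0fix] at hzz
            simp only [sub_self] at hzz
            linarith
        set Z := {s : ℝ | s ∈ Icc x p0 ∧ g s - s = 0} with hZ
        have hZclosed : IsClosed Z := by
          have hZe : Z = Icc x p0 ∩ (fun s => g s - s) ⁻¹' {0} := by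
            ext s
            simp [hZ, Set.mem_inter_iff, Set.mem_preimage]
          rw [hZe]
          exact isClosed_Icc.inter (isClosed_singleton.preimage hφcont)
        have hZne : Z.Nonempty := ⟨p0, ⟨hxp0.le, le_rfl⟩, by rw [hp0fix]; ring⟩
        have hZbdd : BddBelow Z := ⟨x, fun s hs => hs.1.1⟩
        set p := sInf Z with hp
        have hpZ : p ∈ Z := hZclosed.csInf_mem hZne hZbdd
        have hpfix : g p = p := by have := hpZ.2; linarith
        have hpadm : wordAdm f0 f1 d w p :=
          hadm_of p (le_trans hax hpZ.1.1) (le_trans hpZ.1.2 hp01)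
        have hxp : x < p := lt_of_le_of_ne hpZ.1.1 fun he => hfx (by rw [he]; exact hpfix)
        set m := (x + p) / 2 with hm
        have hxm : x < m := by rw [hm]; linarith
        have hmp : m < p := by rw [hm]; linarith
        have hφm : g m - m < 0 := by
          by_contra hc
          push_neg at hc
          have hIVT := intermediate_value_Icc hxm.le (hφcont.continuousOn (s := Icc x m))
          obtain ⟨t, htIcc, htfix⟩ := hIVT (⟨hφxneg.le, hc⟩ : (0:ℝ) ∈ Icc (g x - x) (g m - m))
          dsimp at htfix
          have htZ : t ∈ Z :=
            ⟨⟨htIcc.1, le_trans htIcc.2 (le_trans hmp.le hpZ.1.2)⟩, htfix⟩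
          have := csInf_le hZbdd htZ
          linarith [htIcc.2]
        refine conclude p hpadm hpfix ?_
        have hkey := key_est hH1 hH2 hM hne hxadm hpadm hxp hε habsx
          (by simp only [← hg]; rw [hpfix]; simp [hε.le])
          (by simp only [← hg, ← hm]; linarith)
        nlinarith [hkey]
    · -- 0 ≤ φ x
      have hφxpos : 0 ≤ g x - x := sub_nonneg.2 hsgn.le
      rcases le_total (G x) 1 with hGx | hGx
      · -- Subcase 1 : zero to the right via IVT
        have hIVT := intermediate_value_Icc' hxIcc.2 (hφcont.continuousOn
          (s := Icc x 1))
        have h0mem : (0:ℝ) ∈ Icc (g 1 - 1) (g x - x) := ⟨hφ1, hφxpos⟩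
        obtain ⟨p, hpIcc, hpfix0⟩ := hIVT h0mem
        have hpadm : wordAdm f0 f1 d w p := hadm_of p (le_trans hax hpIcc.1) hpIcc.2
        have hpfix : g p = p := by dsimp at hpfix0; linarith
        rcases eq_or_lt_of_le hpIcc.1 with h | hxp
        · exact conclude p hpadm hpfix (by rw [← h]; nlinarith [mul_pos hMpos hε])
        · refine conclude p hpadm hpfix ?_
          have hmid : g ((x + p) / 2) - (x + p) / 2 ≤ ε := by
            have := hanti hGx x ((x + p) / 2) le_rfl (by linarith) (by linarith [hpIcc.2])
            nlinarith [abs_le.1 habsx]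
          have hkey := key_est hH1 hH2 hM hne hxadm hpadm hxp hε habsx
            (by simp only [← hg]; rw [hpfix]; simp [hε.le]) hmid
          nlinarith [hkey]
      · -- Subcase 2 : zero to the left via IVT
        have hIVT := intermediate_value_Icc hax (hφcont.continuousOn
          (s := Icc (aWord f0 f1 d w) x))
        have h0mem : (0:ℝ) ∈ Icc (g (aWord f0 f1 d w) - aWord f0 f1 d w) (g x - x) :=
          ⟨hφa, hφxpos⟩
        obtain ⟨p, hpIcc, hpfix0⟩ := hIVT h0mem
        have hpadm : wordAdm f0 f1 d w p :=
          hadm_of p hpIcc.1 (le_trans hpIcc.2 hxIcc.2)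
        have hpfix : g p = p := by dsimp at hpfix0; linarith
        rcases eq_or_lt_of_le hpIcc.2 with h | hpx
        · exact conclude p hpadm hpfix (by rw [h]; nlinarith [mul_pos hMpos hε])
        · refine conclude p hpadm hpfix ?_
          have hmid : g ((p + x) / 2) - (p + x) / 2 ≤ ε := by
            have := hmonoφ hGx ((p + x) / 2) x (by linarith [hpIcc.1]) (by linarith) le_rfl
            nlinarith [abs_le.1 habsx]
          have hkey := key_est hH1 hH2 hM hne hpadm hxadm hpx hε
            (by simp only [← hg]; rw [hpfix]; simp [hε.le]) habsx hmid
          exact hkey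


end DGR
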